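/- Let m, n be integers with 1 ≤ m ≤ n, and let π ∈ S_n be chosen uniformly at random. Then 1/(2m) ≤ P(π has no cycle of length < m) ≤ 1/m. -/

import Mathlib

open scoped BigOperators

noncomputable section

/-- `π` has no cycle of length `< m`: the cycle containing each point `x` (whose length is
the minimal period of `π` at `x`, fixed points having period 1) has length at least `m`. -/
def NoShortCycle {n : ℕ} (m : ℕ) (π : Equiv.Perm (Fin n)) : Prop :=
  ∀ x : Fin n, m ≤ Function.minimalPeriod (⇑π) x

section
open Equiv Function
set_option linter.unusedSectionVars false
namespace NSC

variable {α : Type*} [Fintype α] [DecidableEq α]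

/-- every point of `Perm α` is periodic -/
lemma mem_periodicPts (f : Perm α) (x : α) : x ∈ periodicPts ⇑f := by
  refine ⟨orderOf f, orderOf_pos f, ?_⟩
  show (⇑f)^[orderOf f] x = x
  rw [← Equiv.Perm.coe_pow, pow_orderOf_eq_one]; rfl

lemma minimalPeriod_pos (f : Perm α) (x : α) : 0 < minimalPeriod ⇑f x :=
  minimalPeriod_pos_of_mem_periodicPts (mem_periodicPts f x)

lemma minimalPeriod_eq_of_pow_apply_eq {β : Type*} {f g : Perm β} {x : β}
    (h : ∀ i : ℕ, (f ^ i) x = (g ^ i) x) :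
    minimalPeriod ⇑f x = minimalPeriod ⇑g x := by
  have key : ∀ (p q : Perm β), (∀ i : ℕ, (p ^ i) x = (q ^ i) x) →
      minimalPeriod ⇑p x ∣ minimalPeriod ⇑q x := by
    intro p q hpq
    apply IsPeriodicPt.minimalPeriod_dvd
    show (⇑p)^[_] x = x
    rw [← Equiv.Perm.coe_pow, hpq]
    have := iterate_minimalPeriod (f := ⇑q) (x := x)
    rwa [← Equiv.Perm.coe_pow] at this
  exact Nat.dvd_antisymm (key f g h) (key g f fun i => (h i).symm)

lemma minimalPeriod_eq_card_support_cycleOf (f : Perm α) (x : α) (hx : f x ≠ x) :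
    minimalPeriod ⇑f x = (f.cycleOf x).support.card := by
  have hmem : x ∈ (f.cycleOf x).support :=
    Equiv.Perm.mem_support_cycleOf_iff.mpr ⟨Equiv.Perm.SameCycle.refl _ _, Equiv.Perm.mem_support.2 hx⟩
  have key : ∀ n : ℕ, (f ^ n) x = x ↔ (f.cycleOf x).support.card ∣ n := fun n =>
    (Equiv.Perm.isCycleOn_support_cycleOf f x).pow_apply_eq hmem
  refine Nat.dvd_antisymm ?_ ?_
  · apply IsPeriodicPt.minimalPeriod_dvd
    show (⇑f)^[_] x = x
    rw [← Equiv.Perm.coe_pow]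
    exact (key _).mpr dvd_rfl
  · refine (key _).mp ?_
    have := iterate_minimalPeriod (f := ⇑f) (x := x)
    rwa [← Equiv.Perm.coe_pow] at this

lemma minimalPeriod_le_card (f : Perm α) (x : α) [Nonempty α] :
    minimalPeriod ⇑f x ≤ Fintype.card α := by
  by_cases hx : f x = x
  · rw [minimalPeriod_eq_one_iff_isFixedPt.mpr hx]
    exact Fintype.card_pos
  · rw [minimalPeriod_eq_card_support_cycleOf f x hx]
    exact Finset.card_le_univ _

/-- The `NoShortCycle` predicate, generalized to an arbitrary type. -/
def Good (m : ℕ) {β : Type*} (π : Perm β) : Prop :=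
  ∀ x : β, m ≤ minimalPeriod (⇑π) x

/-- Number of good permutations of `Fin t`. -/
def A (m t : ℕ) : ℕ := Nat.card {π : Perm (Fin t) // Good m π}

/-- minimalPeriod is invariant under conjugation by an equiv. -/
lemma minimalPeriod_permCongr {β γ : Type*} (e : β ≃ γ) (π : Perm β) (x : β) :
    minimalPeriod ⇑(e.permCongr π) (e x) = minimalPeriod ⇑π x := by
  have hpow : ∀ i : ℕ, (e.permCongr π ^ i) = e.permCongr (π ^ i) := by
    intro i
    induction i with
    | zero => ext y; simp
    | succ n ih => rw [pow_succ, pow_succ, ih]; ext y; simp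
  have key : ∀ (p : Perm β) (q : Perm γ), (∀ i : ℕ, (q ^ i) (e x) = e ((p ^ i) x)) →
      minimalPeriod ⇑q (e x) ∣ minimalPeriod ⇑p x := by
    intro p q h
    apply IsPeriodicPt.minimalPeriod_dvd
    show (⇑q)^[_] (e x) = e x
    rw [← Equiv.Perm.coe_pow, h]
    congr 1
    have := iterate_minimalPeriod (f := ⇑p) (x := x)
    rwa [← Equiv.Perm.coe_pow] at this
  refine Nat.dvd_antisymm (key π _ fun i => by rw [hpow]; simp) ?_
  have key2 : ∀ i : ℕ, (π ^ i) x = e.symm ((e.permCongr π ^ i) (e x)) := by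
    intro i; rw [hpow]; simp
  apply IsPeriodicPt.minimalPeriod_dvd
  show (⇑π)^[_] x = x
  rw [← Equiv.Perm.coe_pow, key2]
  have := iterate_minimalPeriod (f := ⇑(e.permCongr π)) (x := e x)
  rw [← Equiv.Perm.coe_pow] at this
  rw [this]; simp

/-- The number of good permutations only depends on the cardinality. -/
lemma card_good_eq_A (m : ℕ) (β : Type*) [Fintype β] [DecidableEq β] :
    Nat.card {π : Perm β // Good m π} = A m (Fintype.card β) := by
  classical
  obtain ⟨e⟩ : Nonempty (β ≃ Fin (Fintype.card β)) := ⟨Fintype.equivFin β⟩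
  refine Nat.card_eq_of_bijective (fun π => ⟨e.permCongr π.1, ?_⟩) ?_
  · intro y
    have := π.2 (e.symm y)
    have h2 := minimalPeriod_permCongr e π.1 (e.symm y)
    rw [Equiv.apply_symm_apply] at h2
    omega
  · refine ⟨fun a b hab => ?_, ?_⟩
    · ext1
      have := congrArg Subtype.val hab
      simpa using e.permCongr.injective this
    rintro ⟨σ, hσ⟩
    refine ⟨⟨e.permCongr.symm σ, ?_⟩, ?_⟩
    · intro x
      have := hσ (e x)
      have h2 := minimalPeriod_permCongr e (e.permCongr.symm σ) x
      have h3 : e.permCongr (e.permCongr.symm σ) = σ := e.permCongr.apply_symm_apply σ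
      rw [h3] at h2
      omega
    · ext1
      exact e.permCongr.apply_symm_apply σ


lemma minimalPeriod_ofSubtype {β : Type*} {p : β → Prop} [DecidablePred p]
    (σ : Perm (Subtype p)) (x : Subtype p) :
    minimalPeriod ⇑(Equiv.Perm.ofSubtype σ) (x : β) = minimalPeriod ⇑σ x := by
  have hpow : ∀ i : ℕ, (Equiv.Perm.ofSubtype σ ^ i) (x : β) = ((σ ^ i) x : β) := by
    intro i
    rw [← map_pow, Equiv.Perm.ofSubtype_apply_of_mem (σ ^ i) x.2]
  refine Nat.dvd_antisymm ?_ ?_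
  · apply IsPeriodicPt.minimalPeriod_dvd
    show (⇑(Equiv.Perm.ofSubtype σ))^[_] (x : β) = (x : β)
    rw [← Equiv.Perm.coe_pow, hpow]
    have := iterate_minimalPeriod (f := ⇑σ) (x := x)
    rw [← Equiv.Perm.coe_pow] at this
    rw [this]
  · apply IsPeriodicPt.minimalPeriod_dvd
    show (⇑σ)^[_] x = x
    rw [← Equiv.Perm.coe_pow]
    apply Subtype.ext
    rw [← hpow]
    have := iterate_minimalPeriod (f := ⇑(Equiv.Perm.ofSubtype σ)) (x := (x : β))
    rwa [← Equiv.Perm.coe_pow] at this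

lemma minimalPeriod_subtypePerm {β : Type*} {p : β → Prop}
    (π : Perm β) (h : ∀ x, p (π x) ↔ p x) (x : Subtype p) :
    minimalPeriod ⇑(π.subtypePerm h) x = minimalPeriod ⇑π (x : β) := by
  have hpow : ∀ i : ℕ, (((π.subtypePerm h) ^ i) x : β) = (π ^ i) (x : β) := by
    intro i
    rw [Equiv.Perm.subtypePerm_pow]
    rfl
  refine Nat.dvd_antisymm ?_ ?_
  · apply IsPeriodicPt.minimalPeriod_dvd
    show (⇑(π.subtypePerm h))^[_] x = x
    rw [← Equiv.Perm.coe_pow]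
    apply Subtype.ext
    rw [hpow]
    have := iterate_minimalPeriod (f := ⇑π) (x := (x : β))
    rwa [← Equiv.Perm.coe_pow] at this
  · apply IsPeriodicPt.minimalPeriod_dvd
    show (⇑π)^[_] (x : β) = (x : β)
    rw [← Equiv.Perm.coe_pow, ← hpow]
    have := iterate_minimalPeriod (f := ⇑(π.subtypePerm h)) (x := x)
    rw [← Equiv.Perm.coe_pow] at this
    rw [this]

lemma card_fiber (m : ℕ) (hm : 2 ≤ m) {n : ℕ} (x₀ : Fin n) (t : List (Fin n))
    (hnd : (x₀ :: t).Nodup) (hml : m ≤ (x₀ :: t).length) :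
    Nat.card {π : Perm (Fin n) // Good m π ∧ π.toList x₀ = x₀ :: t}
      = A m (n - (x₀ :: t).length) := by
  classical
  set l : List (Fin n) := x₀ :: t with hldef
  have h2 : 2 ≤ l.length := le_trans hm hml
  have hcyc : (l.formPerm).IsCycle := List.isCycle_formPerm hnd h2
  have hsupp : l.formPerm.support = l.toFinset := List.support_formPerm_of_nodup l hnd (by
    intro y hy
    rw [hy] at h2
    simp at h2)
  have hcard_supp : l.formPerm.support.card = l.length := by
    rw [hsupp, List.card_toFinset, List.dedup_eq_self.mpr hnd]
  have hx₀l : x₀ ∈ l := List.mem_cons_self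
  -- facts about the composite permutation, for every σ on the complement
  have hdisj : ∀ σ : Perm {x : Fin n // x ∉ l},
      Equiv.Perm.Disjoint l.formPerm (Equiv.Perm.ofSubtype σ) := by
    intro σ x
    by_cases hx : x ∈ l
    · exact Or.inr (Equiv.Perm.ofSubtype_apply_of_not_mem σ (by simpa using hx))
    · exact Or.inl (List.formPerm_apply_of_notMem hx)
  have hpowl : ∀ (σ : Perm {x : Fin n // x ∉ l}) (i : ℕ) (x : Fin n), x ∈ l →
      ((l.formPerm * Equiv.Perm.ofSubtype σ) ^ i) x = (l.formPerm ^ i) x := by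
    intro σ i x hx
    rw [(hdisj σ).commute.mul_pow, Equiv.Perm.mul_apply, ← map_pow,
      Equiv.Perm.ofSubtype_apply_of_not_mem (σ ^ i) (by simpa using hx)]
  have hpowc : ∀ (σ : Perm {x : Fin n // x ∉ l}) (i : ℕ) (x : Fin n) (hx : x ∉ l),
      ((l.formPerm * Equiv.Perm.ofSubtype σ) ^ i) x = (Equiv.Perm.ofSubtype σ ^ i) x := by
    intro σ i x hx
    rw [(hdisj σ).commute.mul_pow, Equiv.Perm.mul_apply, ← map_pow,
      Equiv.Perm.ofSubtype_apply_of_mem (σ ^ i) hx]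
    have hmem : (((σ ^ i) ⟨x, hx⟩ : {x : Fin n // x ∉ l}) : Fin n) ∉ l := ((σ ^ i) ⟨x, hx⟩).2
    rw [Equiv.Perm.pow_apply_eq_self_of_apply_eq_self (List.formPerm_apply_of_notMem hmem)]
  have hmpl : ∀ (σ : Perm {x : Fin n // x ∉ l}) (x : Fin n), x ∈ l →
      minimalPeriod ⇑(l.formPerm * Equiv.Perm.ofSubtype σ) x = l.length := by
    intro σ x hx
    have hmove : l.formPerm x ≠ x := by
      have : x ∈ l.formPerm.support := by rw [hsupp, List.mem_toFinset]; exact hx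
      exact Equiv.Perm.mem_support.mp this
    rw [minimalPeriod_eq_of_pow_apply_eq (fun i => hpowl σ i x hx),
      minimalPeriod_eq_card_support_cycleOf _ x hmove, hcyc.cycleOf_eq hmove, hcard_supp]
  have htl : ∀ σ : Perm {x : Fin n // x ∉ l},
      (l.formPerm * Equiv.Perm.ofSubtype σ).toList x₀ = l := by
    intro σ
    have hmp := hmpl σ x₀ hx₀l
    have hmove : (l.formPerm * Equiv.Perm.ofSubtype σ) x₀ ≠ x₀ := by
      intro hfix
      rw [minimalPeriod_eq_one_iff_isFixedPt.mpr hfix] at hmp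
      omega
    have hlen : ((l.formPerm * Equiv.Perm.ofSubtype σ).toList x₀).length = l.length := by
      rw [Equiv.Perm.length_toList, ← minimalPeriod_eq_card_support_cycleOf _ x₀ hmove, hmp]
    apply List.ext_getElem hlen
    intro i h1 h2'
    have hi : i < l.length := by omega
    have := Equiv.Perm.getElem_toList (l.formPerm * Equiv.Perm.ofSubtype σ) x₀ i h1
    rw [this, hpowl σ i x₀ hx₀l]
    have hget := List.formPerm_pow_apply_getElem l hnd i 0 (by omega)
    have h0 : l[0]'(by omega) = x₀ := rfl
    rw [h0] at hget
    rw [hget]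
    congr 1
    rw [Nat.zero_add]
    exact Nat.mod_eq_of_lt hi
  have hgood : ∀ σ : {σ : Perm {x : Fin n // x ∉ l} // Good m σ},
      Good m (l.formPerm * Equiv.Perm.ofSubtype σ.1) := by
    rintro ⟨σ, hσ⟩ x
    by_cases hx : x ∈ l
    · rw [hmpl σ x hx]; exact hml
    · rw [minimalPeriod_eq_of_pow_apply_eq (fun i => hpowc σ i x hx),
        minimalPeriod_ofSubtype σ ⟨x, hx⟩]
      exact hσ ⟨x, hx⟩
  -- the bijection
  have hbij : Nat.card {σ : Perm {x : Fin n // x ∉ l} // Good m σ}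
      = Nat.card {π : Perm (Fin n) // Good m π ∧ π.toList x₀ = l} := by
    apply Nat.card_eq_of_bijective
      (f := fun σ => ⟨l.formPerm * Equiv.Perm.ofSubtype σ.1, hgood σ, htl σ.1⟩)
    constructor
    · rintro ⟨σ, hσ⟩ ⟨σ', hσ'⟩ hss
      have h1 : l.formPerm * Equiv.Perm.ofSubtype σ = l.formPerm * Equiv.Perm.ofSubtype σ' :=
        congrArg Subtype.val hss
      have h2 : Equiv.Perm.ofSubtype σ = Equiv.Perm.ofSubtype σ' := mul_left_cancel h1
      ext x
      have h3 : ((σ x : {x : Fin n // x ∉ l}) : Fin n) = ((σ' x : {x : Fin n // x ∉ l}) : Fin n) := by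
        rw [← Equiv.Perm.ofSubtype_apply_of_mem σ x.2, ← Equiv.Perm.ofSubtype_apply_of_mem σ' x.2,
          h2]
      exact congrArg Fin.val h3
    · rintro ⟨π, hπg, hπl⟩
      have hx₀sup : π x₀ ≠ x₀ := by
        intro hfix
        have := hπg x₀
        rw [minimalPeriod_eq_one_iff_isFixedPt.mpr hfix] at this
        omega
      have hmemiff : ∀ y, y ∈ l ↔ π.SameCycle x₀ y := by
        intro y
        rw [← hπl, Equiv.Perm.mem_toList_iff]
        simp [Equiv.Perm.mem_support.mpr hx₀sup]
      have hinv : ∀ x : Fin n, x ∉ l ↔ π x ∉ l := by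
        intro x
        rw [hmemiff x, hmemiff (π x), Equiv.Perm.sameCycle_apply_right]
      set σ : Perm {x : Fin n // x ∉ l} := π.subtypePerm (fun x => (hinv x).symm) with hσdef
      have hσg : Good m σ := by
        intro x
        rw [hσdef, minimalPeriod_subtypePerm]
        exact hπg (x : Fin n)
      refine ⟨⟨σ, hσg⟩, ?_⟩
      apply Subtype.ext
      show l.formPerm * Equiv.Perm.ofSubtype σ = π
      have hform : l.formPerm = π.cycleOf x₀ := by
        rw [← hπl, Equiv.Perm.formPerm_toList]
      ext y
      by_cases hy : y ∈ l
      · rw [Equiv.Perm.mul_apply, Equiv.Perm.ofSubtype_apply_of_not_mem σ (by simpa using hy),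
          hform, Equiv.Perm.SameCycle.cycleOf_apply ((hmemiff y).mp hy)]
      · rw [Equiv.Perm.mul_apply, Equiv.Perm.ofSubtype_apply_of_mem σ hy]
        have hval : ((σ ⟨y, hy⟩ : {x : Fin n // x ∉ l}) : Fin n) = π y := rfl
        rw [hval, hform, Equiv.Perm.cycleOf_apply_of_not_sameCycle]
        intro hc
        rw [Equiv.Perm.sameCycle_apply_right] at hc
        exact hy ((hmemiff y).mpr hc)
  rw [← hbij, card_good_eq_A]
  congr 1
  have hcl : Fintype.card {x : Fin n // x ∈ l} = l.length := by
    calc Fintype.card {x : Fin n // x ∈ l}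
        = Fintype.card {x : Fin n // x ∈ l.toFinset} :=
          Fintype.card_congr (Equiv.subtypeEquivRight (by simp))
      _ = l.toFinset.card := Fintype.card_coe _
      _ = l.length := by rw [List.card_toFinset, List.dedup_eq_self.mpr hnd]
  have hcc := Fintype.card_subtype_compl (p := fun x : Fin n => x ∈ l)
  rw [hcl, Fintype.card_fin] at hcc
  exact hcc


lemma A_zero (m : ℕ) : A m 0 = 1 := by
  haveI : Unique {π : Equiv.Perm (Fin 0) // Good m π} :=
    ⟨⟨⟨1, fun x => x.elim0⟩⟩, fun s => Subtype.ext (Equiv.ext fun x => x.elim0)⟩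
  exact Nat.card_unique

lemma A_recurrence (m : ℕ) (hm : 2 ≤ m) (n : ℕ) (hn : 1 ≤ n) :
    A m n = ∑ k ∈ Finset.Icc m n, (n - 1).descFactorial (k - 1) * A m (n - k) := by
  classical
  set x₀ : Fin n := ⟨0, hn⟩ with hx₀def
  haveI : Nonempty (Fin n) := ⟨x₀⟩
  set G : Finset (Equiv.Perm (Fin n)) := Finset.univ.filter (Good m) with hGdef
  have hAG : A m n = G.card := by
    rw [A, Nat.card_eq_fintype_card, Fintype.card_subtype]
  -- step 1 : fiber by the minimal period of x₀
  have step1 : G.card = ∑ k ∈ Finset.Icc m n,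
      (G.filter fun π : Equiv.Perm (Fin n) => minimalPeriod (⇑π) x₀ = k).card := by
    apply Finset.card_eq_sum_card_fiberwise
    intro π hπ
    rw [hGdef, Finset.mem_coe, Finset.mem_filter] at hπ
    rw [Finset.mem_coe, Finset.mem_Icc]
    refine ⟨hπ.2 x₀, ?_⟩
    have := minimalPeriod_le_card π x₀
    rwa [Fintype.card_fin] at this
  -- step 2 : count each fiber
  have step2 : ∀ k ∈ Finset.Icc m n,
      (G.filter fun π : Equiv.Perm (Fin n) => minimalPeriod (⇑π) x₀ = k).card
        = (n - 1).descFactorial (k - 1) * A m (n - k) := by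
    intro k hk
    rw [Finset.mem_Icc] at hk
    have hk2 : 2 ≤ k := le_trans hm hk.1
    set Gk := G.filter fun π : Equiv.Perm (Fin n) => minimalPeriod (⇑π) x₀ = k with hGkdef
    set Ψ : Equiv.Perm (Fin n) → (Fin (k - 1) → Fin n) :=
      fun π i => (π ^ ((i : ℕ) + 1)) x₀ with hΨdef
    set V : Finset (Fin (k - 1) → Fin n) :=
      Finset.univ.filter (fun f => Function.Injective f ∧ ∀ i, f i ≠ x₀) with hVdef
    -- membership of fibers
    have hmem : ∀ π ∈ Gk, Ψ π ∈ V := by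
      intro π hπ
      rw [hGkdef, Finset.mem_filter, hGdef, Finset.mem_filter] at hπ
      obtain ⟨⟨-, hg⟩, hmp⟩ := hπ
      have hinj := iterate_injOn_Iio_minimalPeriod (f := ⇑π) (x := x₀)
      have hiter : ∀ j : ℕ, (⇑π)^[j] x₀ = (π ^ j) x₀ := by
        intro j; rw [Equiv.Perm.coe_pow]
      rw [hVdef, Finset.mem_filter]
      refine ⟨Finset.mem_univ _, fun a b hab => ?_, fun i hi => ?_⟩
      · have := hinj (by rw [Set.mem_Iio, hmp]; omega : ((a : ℕ) + 1) ∈ Set.Iio _)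
          (by rw [Set.mem_Iio, hmp]; omega : ((b : ℕ) + 1) ∈ Set.Iio _)
          (by simpa only [hiter] using hab)
        ext; omega
      · have := hinj (by rw [Set.mem_Iio, hmp]; omega : ((i : ℕ) + 1) ∈ Set.Iio _)
          (by rw [Set.mem_Iio, hmp]; omega : (0 : ℕ) ∈ Set.Iio _)
          (by simp only [hiter, pow_zero, Equiv.Perm.one_apply]; exact hi)
        omega
    have inner : Gk.card = ∑ f ∈ V, (Gk.filter fun π => Ψ π = f).card :=
      Finset.card_eq_sum_card_fiberwise hmem
    -- each inner fiber has cardinality A m (n - k)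
    have hfib : ∀ f ∈ V, (Gk.filter fun π => Ψ π = f).card = A m (n - k) := by
      intro f hf
      rw [hVdef, Finset.mem_filter] at hf
      obtain ⟨-, hfinj, hfne⟩ := hf
      set l : List (Fin n) := x₀ :: List.ofFn f with hldef
      have hlnd : l.Nodup := by
        rw [hldef, List.nodup_cons]
        refine ⟨fun hmem' => ?_, List.nodup_ofFn.mpr hfinj⟩
        rw [List.mem_ofFn] at hmem'
        obtain ⟨i, hi⟩ := hmem'
        exact hfne i hi
      have hllen : l.length = k := by
        rw [hldef]
        simp only [List.length_cons, List.length_ofFn]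
        omega
      have hiter : ∀ (π : Equiv.Perm (Fin n)) (j : ℕ), (⇑π)^[j] x₀ = (π ^ j) x₀ := by
        intro π j; rw [Equiv.Perm.coe_pow]
      -- the fiber equals the set of good perms with cycle list l
      have hset : Gk.filter (fun π => Ψ π = f)
          = Finset.univ.filter (fun π => Good m π ∧ π.toList x₀ = l) := by
        ext π
        simp only [hGkdef, hGdef, Finset.filter_filter, Finset.mem_filter, Finset.mem_univ,
          true_and]
        constructor
        · rintro ⟨⟨hg, hmp⟩, hΨ⟩
          refine ⟨hg, ?_⟩
          have hne : π x₀ ≠ x₀ := by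
            intro hfix
            rw [minimalPeriod_eq_one_iff_isFixedPt.mpr hfix] at hmp
            omega
          have hlen : (π.toList x₀).length = k := by
            rw [Equiv.Perm.length_toList, ← minimalPeriod_eq_card_support_cycleOf π x₀ hne, hmp]
          apply List.ext_getElem (by rw [hlen, hllen])
          intro j hj1 hj2
          have hjk : j < k := by rwa [hlen] at hj1
          have hget := Equiv.Perm.getElem_toList π x₀ j hj1
          rw [hget]
          match j, hjk with
          | 0, _ => simp [hldef]
          | (i + 1), hik =>
            have hcf := congrFun hΨ ⟨i, by omega⟩
            have : (π ^ (i + 1)) x₀ = f ⟨i, by omega⟩ := hcf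
            simp only [hldef, List.getElem_cons_succ, List.getElem_ofFn]
            exact this
        · rintro ⟨hg, htl⟩
          have hne : π x₀ ≠ x₀ := by
            intro hfix
            have := hg x₀
            rw [minimalPeriod_eq_one_iff_isFixedPt.mpr hfix] at this
            omega
          have hmp : minimalPeriod ⇑π x₀ = k := by
            rw [minimalPeriod_eq_card_support_cycleOf π x₀ hne, ← Equiv.Perm.length_toList, htl,
              hllen]
          refine ⟨⟨hg, hmp⟩, ?_⟩
          funext i
          have hi1 : (i : ℕ) + 1 < (π.toList x₀).length := by
            rw [htl, hllen]; omega
          have hget := Equiv.Perm.getElem_toList π x₀ ((i : ℕ) + 1) hi1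
          show (π ^ ((i : ℕ) + 1)) x₀ = f i
          rw [← hget]
          simp only [htl, hldef, List.getElem_cons_succ, List.getElem_ofFn, Fin.eta]
      -- now compute the cardinality via the fiber lemma
      rw [hset]
      have hcard := card_fiber m hm x₀ (List.ofFn f) (by rw [← hldef]; exact hlnd)
        (by rw [← hldef, hllen]; exact hk.1)
      rw [← hldef, hllen] at hcard
      rw [Nat.card_eq_fintype_card, Fintype.card_subtype] at hcard
      exact hcard
    -- count V
    have hV : V.card = (n - 1).descFactorial (k - 1) := by
      have e1 : {g : Fin (k - 1) → Fin n // Function.Injective g ∧ ∀ i, g i ≠ x₀}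
          ≃ (Fin (k - 1) ↪ {x : Fin n // x ≠ x₀}) :=
        { toFun := fun g => ⟨fun i => ⟨g.1 i, g.2.2 i⟩,
            fun a b hab => g.2.1 (congrArg Subtype.val hab)⟩
          invFun := fun e => ⟨fun i => (e i : Fin n),
            fun a b h => e.injective (Subtype.ext h), fun i => (e i).2⟩
          left_inv := fun g => rfl
          right_inv := fun e => rfl }
      have h1 : V.card
          = Fintype.card {g : Fin (k - 1) → Fin n // Function.Injective g ∧ ∀ i, g i ≠ x₀} := by
        rw [Fintype.card_subtype]
      have h2 : Fintype.card {x : Fin n // x ≠ x₀} = n - 1 := by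
        have hc := Fintype.card_subtype_compl (p := fun x : Fin n => x = x₀)
        rw [Fintype.card_subtype_eq, Fintype.card_fin] at hc
        exact hc
      rw [h1, Fintype.card_congr e1, Fintype.card_embedding_eq, h2, Fintype.card_fin]
    rw [inner, Finset.sum_congr rfl hfib, Finset.sum_const, smul_eq_mul, hV]
  rw [hAG, step1]
  exact Finset.sum_congr rfl step2


lemma A_small (m : ℕ) (hm : 2 ≤ m) (j : ℕ) (h1 : 1 ≤ j) (h2 : j < m) : A m j = 0 := by
  rw [A_recurrence m hm j h1, Finset.Icc_eq_empty (by omega), Finset.sum_empty]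

lemma q_rec (m : ℕ) (hm : 2 ≤ m) (n : ℕ) (hn : m ≤ n) :
    (A m n : ℝ) / (n.factorial : ℝ)
      = (∑ j ∈ Finset.range (n - m + 1), (A m j : ℝ) / (j.factorial : ℝ)) / n := by
  have hn1 : 1 ≤ n := by omega
  have hrec := A_recurrence m hm n hn1
  have hreindex : ∑ k ∈ Finset.Icc m n, (n - 1).descFactorial (k - 1) * A m (n - k)
      = ∑ j ∈ Finset.range (n - m + 1), (n - 1).descFactorial (n - 1 - j) * A m j := by
    apply Finset.sum_nbij' (i := fun k => n - k) (j := fun j => n - j)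
    · intro k hk; rw [Finset.mem_Icc] at hk; rw [Finset.mem_range]; omega
    · intro j hj; rw [Finset.mem_range] at hj; rw [Finset.mem_Icc]; omega
    · intro k hk; rw [Finset.mem_Icc] at hk; omega
    · intro j hj; rw [Finset.mem_range] at hj; omega
    · intro k hk
      rw [Finset.mem_Icc] at hk
      congr 2
      omega
  have key : ∀ j ∈ Finset.range (n - m + 1),
      (((n - 1).descFactorial (n - 1 - j) * A m j : ℕ) : ℝ) / (n.factorial : ℝ)
        = (A m j : ℝ) / (j.factorial : ℝ) / n := by
    intro j hj
    rw [Finset.mem_range] at hj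
    have hjn : j ≤ n - 1 := by omega
    have hfact : (n - 1 - (n - 1 - j)).factorial * (n - 1).descFactorial (n - 1 - j)
        = (n - 1).factorial := Nat.factorial_mul_descFactorial (by omega)
    have h2 : n - 1 - (n - 1 - j) = j := by omega
    rw [h2] at hfact
    have hnfact : (n.factorial : ℝ) = n * ((n - 1).factorial : ℝ) := by
      obtain ⟨t, rfl⟩ : ∃ t, n = t + 1 := ⟨n - 1, by omega⟩
      simp [Nat.factorial_succ]
    have hfact' : (j.factorial : ℝ) * ((n - 1).descFactorial (n - 1 - j) : ℝ)
        = ((n - 1).factorial : ℝ) := by exact_mod_cast congrArg Nat.cast hfact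
    have hj0 : (j.factorial : ℝ) ≠ 0 := Nat.cast_ne_zero.mpr (Nat.factorial_ne_zero _)
    have hn10 : (((n - 1).factorial : ℕ) : ℝ) ≠ 0 := Nat.cast_ne_zero.mpr (Nat.factorial_ne_zero _)
    have hn0 : (n : ℝ) ≠ 0 := Nat.cast_ne_zero.mpr (by omega)
    push_cast
    rw [hnfact]
    field_simp
    linear_combination (A m j : ℝ) * hfact'
  calc (A m n : ℝ) / (n.factorial : ℝ)
      = ((∑ j ∈ Finset.range (n - m + 1),
          (n - 1).descFactorial (n - 1 - j) * A m j : ℕ) : ℝ) / (n.factorial : ℝ) := by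
        rw [hrec, hreindex]
    _ = ∑ j ∈ Finset.range (n - m + 1),
          (((n - 1).descFactorial (n - 1 - j) * A m j : ℕ) : ℝ) / (n.factorial : ℝ) := by
        rw [Nat.cast_sum, Finset.sum_div]
    _ = ∑ j ∈ Finset.range (n - m + 1), (A m j : ℝ) / (j.factorial : ℝ) / n :=
        Finset.sum_congr rfl key
    _ = (∑ j ∈ Finset.range (n - m + 1), (A m j : ℝ) / (j.factorial : ℝ)) / n := by
        rw [Finset.sum_div]

lemma q_bounds (m : ℕ) (hm : 2 ≤ m) : ∀ n : ℕ, m ≤ n →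
    1 / (2 * (m : ℝ)) ≤ (A m n : ℝ) / (n.factorial : ℝ)
      ∧ (A m n : ℝ) / (n.factorial : ℝ) ≤ 1 / (m : ℝ) := by
  intro n
  induction n using Nat.strong_induction_on with
  | _ n ih =>
    intro hn
    have hm0 : (0 : ℝ) < m := by positivity
    have hn0 : (0 : ℝ) < n := by
      have : 0 < n := by omega
      exact_mod_cast this
    rw [q_rec m hm n hn]
    set q : ℕ → ℝ := fun j => (A m j : ℝ) / (j.factorial : ℝ) with hqdef
    have hq0 : q 0 = 1 := by simp [hqdef, A_zero]
    have hsum0 : ∑ j ∈ Finset.range (n - m + 1), q j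
        = q 0 + ∑ j ∈ Finset.Ico 1 (n - m + 1), q j := by
      rw [Finset.range_eq_Ico, Finset.sum_eq_sum_Ico_succ_bot (by omega)]
    have hsum1 : ∑ j ∈ Finset.Ico 1 (n - m + 1), q j
        = ∑ j ∈ Finset.Ico m (n - m + 1), q j := by
      symm
      apply Finset.sum_subset
      · apply Finset.Ico_subset_Ico (by omega) le_rfl
      · intro j hj hj2
        rw [Finset.mem_Ico] at hj hj2
        have : A m j = 0 := A_small m hm j (by omega) (by omega)
        simp [hqdef, this]
    set c : ℕ := (n - m + 1) - m with hcdef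
    have hcard : (Finset.Ico m (n - m + 1)).card = c := by
      rw [Nat.card_Ico]
    have hlow : (c : ℝ) * (1 / (2 * (m : ℝ))) ≤ ∑ j ∈ Finset.Ico m (n - m + 1), q j := by
      rw [← hcard]
      have := Finset.card_nsmul_le_sum (Finset.Ico m (n - m + 1)) q (1 / (2 * (m : ℝ)))
        (fun j hj => by
          rw [Finset.mem_Ico] at hj
          exact (ih j (by omega) hj.1).1)
      simpa [nsmul_eq_mul] using this
    have hhigh : ∑ j ∈ Finset.Ico m (n - m + 1), q j ≤ (c : ℝ) * (1 / (m : ℝ)) := by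
      rw [← hcard]
      have := Finset.sum_le_card_nsmul (Finset.Ico m (n - m + 1)) q (1 / (m : ℝ))
        (fun j hj => by
          rw [Finset.mem_Ico] at hj
          exact (ih j (by omega) hj.1).2)
      simpa [nsmul_eq_mul] using this
    have hmc_le : (m : ℝ) + c ≤ n := by
      have : m + c ≤ n := by omega
      exact_mod_cast this
    have hmc_ge : (n : ℝ) ≤ 2 * m + c := by
      have : n ≤ 2 * m + c := by omega
      exact_mod_cast this
    have hS : ∑ j ∈ Finset.range (n - m + 1), q j
        = 1 + ∑ j ∈ Finset.Ico m (n - m + 1), q j := by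
      rw [hsum0, hsum1, hq0]
    constructor
    · rw [hS, div_le_div_iff₀ (by positivity : (0:ℝ) < 2 * m) hn0]
      have h1 : (c : ℝ) ≤ (∑ j ∈ Finset.Ico m (n - m + 1), q j) * (2 * m) := by
        have := mul_le_mul_of_nonneg_right hlow (le_of_lt (by positivity : (0:ℝ) < 2 * m))
        rwa [mul_one_div, div_mul_cancel₀ _ (by positivity : (2 * (m:ℝ)) ≠ 0)] at this
      nlinarith [h1, hmc_ge]
    · rw [hS, div_le_div_iff₀ hn0 hm0]
      have h1 : (∑ j ∈ Finset.Ico m (n - m + 1), q j) * m ≤ (c : ℝ) := by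
        have := mul_le_mul_of_nonneg_right hhigh hm0.le
        rwa [mul_one_div, div_mul_cancel₀ _ (ne_of_gt hm0)] at this
      nlinarith [h1, hmc_le]

lemma A_one (n : ℕ) : A 1 n = n.factorial := by
  rw [A]
  have : ∀ π : Equiv.Perm (Fin n), Good 1 π := fun π x => minimalPeriod_pos π x
  rw [Nat.card_congr (Equiv.subtypeUnivEquiv this), Nat.card_eq_fintype_card]
  simp [Fintype.card_perm]

end NSC


theorem no_short_cycle_prob (n m : ℕ) (h1 : 1 ≤ m) (h2 : m ≤ n) :
    (1 : ℝ) / (2 * m) ≤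
        (Nat.card {π : Equiv.Perm (Fin n) // NoShortCycle m π} : ℝ) / (Nat.factorial n : ℝ) ∧
      (Nat.card {π : Equiv.Perm (Fin n) // NoShortCycle m π} : ℝ) / (Nat.factorial n : ℝ) ≤
        (1 : ℝ) / m := by
  have hcardeq : Nat.card {π : Equiv.Perm (Fin n) // NoShortCycle m π} = NSC.A m n := rfl
  rw [hcardeq]
  rcases eq_or_lt_of_le h1 with hm1 | hm2
  · subst hm1
    rw [NSC.A_one]
    have hfac : ((n.factorial : ℕ) : ℝ) ≠ 0 := Nat.cast_ne_zero.mpr (Nat.factorial_ne_zero n)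
    rw [div_self hfac]
    norm_num
  · exact NSC.q_bounds m hm2 n h2

end
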